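/- Let p be a prime, G a finite group, S a Sylow p-subgroup of G, N a normal subgroup of G, S0 := S ∩ N, and let T be a subgroup of G with S0 ≤ T ≤ S. Let P be a subgroup of T and set P0 := P ∩ N. Assume there exists a subgroup U of N such that every element of U has order coprime to p, every element of U commutes with every element of P0, and every element of C_N(P0) can be written as z·u with z in the center Z(P0) of P0 and u ∈ U. Then A°(P) = O^p(Aut_{NT}(P)) = O^p(Aut_N(P)), where NT denotes the subgroup N ⊔ T of G. -/

import Mathlib

/-- The subgroup of `MulAut ↥P` consisting of automorphisms of `P` induced by
conjugation by elements of `H` normalizing `P`. -/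
def autBy {G : Type*} [Group G] (H P : Subgroup G) : Subgroup (MulAut ↥P) :=
  Subgroup.closure
    {φ : MulAut ↥P | ∃ h ∈ H, h ∈ Subgroup.normalizer (P : Set G) ∧ ∀ x : ↥P, (φ x : G) = h⁻¹ * x * h}

/-- `O^p(K)`: the subgroup generated by the elements of `K` of order coprime to `p`. -/
def Op (p : ℕ) {M : Type*} [Group M] (K : Subgroup M) : Subgroup M :=
  Subgroup.closure {x : M | x ∈ K ∧ Nat.Coprime (orderOf x) p}

/-- `A°(P)` relative to the normal subgroup `N`: the subgroup of `MulAut ↥P` generated by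
the `p'`-automorphisms of `P` which are induced by conjugation by an element of `G`
normalizing `P`, satisfy `[P, φ] ≤ P ⊓ N`, and restrict on `P ⊓ N` to conjugation by an
element of `N` normalizing `P ⊓ N`. -/
def Acirc {G : Type*} [Group G] (p : ℕ) (N P : Subgroup G) : Subgroup (MulAut ↥P) :=
  Subgroup.closure
    {φ : MulAut ↥P | Nat.Coprime (orderOf φ) p ∧
      (∃ g ∈ Subgroup.normalizer (P : Set G), ∀ x : ↥P, (φ x : G) = g⁻¹ * x * g) ∧
      (∀ x : ↥P, (x : G)⁻¹ * (φ x : G) ∈ P ⊓ N) ∧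
      (∃ n ∈ N, n ∈ Subgroup.normalizer ((P ⊓ N : Subgroup G) : Set G) ∧
        ∀ x : ↥P, (x : G) ∈ N → (φ x : G) = n⁻¹ * x * n)}






section Helper

variable {G : Type*} [Group G]

/-- Conjugation by an element of the normalizer as an automorphism of `P`. -/
def conjAut (P : Subgroup G) {h : G} (hh : h ∈ Subgroup.normalizer (P : Set G)) : MulAut ↥P where
  toFun x := ⟨h⁻¹ * x * h, by
    have := (Subgroup.mem_normalizer_iff''.mp hh (x : G)).mp x.2
    simpa using this⟩
  invFun x := ⟨h * x * h⁻¹, (Subgroup.mem_normalizer_iff.mp hh (x : G)).mp x.2⟩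
  left_inv x := by ext; simp [mul_assoc]
  right_inv x := by ext; simp [mul_assoc]
  map_mul' x y := by ext; push_cast; group

@[simp] lemma coe_conjAut (P : Subgroup G) {h : G} (hh : h ∈ Subgroup.normalizer (P : Set G)) (x : ↥P) :
    (conjAut P hh x : G) = h⁻¹ * x * h := rfl

lemma conjAut_congr (P : Subgroup G) {a b : G} (hab : a = b) (ha : a ∈ Subgroup.normalizer (P : Set G))
    (hb : b ∈ Subgroup.normalizer (P : Set G)) : conjAut P ha = conjAut P hb := by
  subst hab; rfl

lemma conjAut_one (P : Subgroup G) (h1 : (1 : G) ∈ Subgroup.normalizer (P : Set G)) :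
    conjAut P h1 = 1 := by
  ext x; simp [conjAut]

lemma conjAut_mul (P : Subgroup G) {a b : G} (ha : a ∈ Subgroup.normalizer (P : Set G)) (hb : b ∈ Subgroup.normalizer (P : Set G)) :
    conjAut P ha * conjAut P hb = conjAut P (mul_mem hb ha) := by
  ext x; simp [conjAut, mul_assoc]

lemma conjAut_inv (P : Subgroup G) {h : G} (hh : h ∈ Subgroup.normalizer (P : Set G)) :
    (conjAut P hh)⁻¹ = conjAut P (inv_mem hh) := by
  symm
  apply eq_inv_of_mul_eq_one_left
  rw [conjAut_mul]
  rw [conjAut_congr P (mul_inv_cancel h) _ (one_mem _)]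
  exact conjAut_one P (one_mem _)

lemma conjAut_pow (P : Subgroup G) {a : G} (ha : a ∈ Subgroup.normalizer (P : Set G)) (j : ℕ) :
    conjAut P ha ^ j = conjAut P (pow_mem ha j) := by
  induction j with
  | zero =>
    rw [pow_zero]
    exact (conjAut_congr P (pow_zero a) _ (one_mem _) ▸ (conjAut_one P (one_mem _)).symm)
  | succ j ih =>
    rw [pow_succ, ih, conjAut_mul]
    exact conjAut_congr P (pow_succ' a j).symm _ _

end Helper

section MemAutBy

variable {G : Type*} [Group G]

/-- The subgroup with the explicit carrier. -/
def autByGrp (H P : Subgroup G) : Subgroup (MulAut ↥P) where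
  carrier := {φ : MulAut ↥P | ∃ h ∈ H, h ∈ Subgroup.normalizer (P : Set G) ∧ ∀ x : ↥P, (φ x : G) = h⁻¹ * x * h}
  one_mem' := ⟨1, one_mem _, one_mem _, fun x => by simp⟩
  mul_mem' := by
    rintro φ ψ ⟨h, hH, hn, hf⟩ ⟨k, kH, kn, kf⟩
    refine ⟨k * h, mul_mem kH hH, mul_mem kn hn, fun x => ?_⟩
    have : ((φ * ψ) x : G) = (φ (ψ x) : G) := rfl
    rw [this, hf (ψ x), kf x]
    group
  inv_mem' := by
    rintro φ ⟨h, hH, hn, hf⟩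
    refine ⟨h⁻¹, inv_mem hH, inv_mem hn, fun x => ?_⟩
    have h1 : (φ (φ⁻¹ x) : G) = h⁻¹ * (φ⁻¹ x : G) * h := hf _
    have h2 : φ (φ⁻¹ x) = x := by
      simp
    rw [h2] at h1
    rw [inv_inv]
    rw [h1]
    group

lemma mem_autBy {H P : Subgroup G} {φ : MulAut ↥P} :
    φ ∈ autBy H P ↔
      ∃ h ∈ H, h ∈ Subgroup.normalizer (P : Set G) ∧ ∀ x : ↥P, (φ x : G) = h⁻¹ * x * h := by
  have : autBy H P = autByGrp H P := by
    apply le_antisymm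
    · exact Subgroup.closure_le _ |>.mpr fun ψ hψ => hψ
    · intro ψ hψ
      exact Subgroup.subset_closure hψ
  rw [this]; rfl

lemma autBy_mono {H H' : Subgroup G} (P : Subgroup G) (h : H ≤ H') :
    autBy H P ≤ autBy H' P :=
  Subgroup.closure_mono (by rintro φ ⟨a, ha, h1, h2⟩; exact ⟨a, h ha, h1, h2⟩)

/-- Conjugation-stability of `autBy N P` with `N` normal. -/
lemma autBy_conj_mem {N P : Subgroup G} [N.Normal] {a : G} (ha : a ∈ Subgroup.normalizer (P : Set G))
    {χ : MulAut ↥P} (hχ : χ ∈ autBy N P) :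
    conjAut P ha * χ * (conjAut P ha)⁻¹ ∈ autBy N P := by
  obtain ⟨w, hwN, hwn, hw⟩ := mem_autBy.mp hχ
  refine mem_autBy.mpr ⟨a⁻¹ * w * a, ?_, ?_, fun x => ?_⟩
  · simpa using Subgroup.Normal.conj_mem ‹N.Normal› w hwN a⁻¹
  · exact mul_mem (mul_mem (inv_mem ha) hwn) ha
  · rw [conjAut_inv]
    have e1 : ((conjAut P ha * χ * conjAut P (inv_mem ha)) x : G)
        = (conjAut P ha (χ (conjAut P (inv_mem ha) x)) : G) := rfl
    rw [e1, coe_conjAut, hw, coe_conjAut]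
    group

end MemAutBy


section Stab

variable {G : Type*} [Group G] [Finite G]

instance mulAutFinite (P : Subgroup G) : Finite (MulAut ↥P) :=
  Finite.of_injective (fun (φ : MulAut ↥P) => (φ : ↥P ≃ ↥P))
    (fun φ ψ h => by
      ext x
      have := congrArg (fun (e : ↥P ≃ ↥P) => e x) h
      exact congrArg Subtype.val this)

/-- Automorphisms `ψ` of `P` that are trivial on `P/(P ⊓ N)` and restrict to conjugation
by an element of `N` on `P ⊓ N`. -/
def stab (N P : Subgroup G) : Subgroup (MulAut ↥P) where
  carrier := {ψ : MulAut ↥P |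
    (∀ x : ↥P, (x : G)⁻¹ * (ψ x : G) ∈ P ⊓ N) ∧
    (∃ n ∈ N, n ∈ Subgroup.normalizer ((P ⊓ N : Subgroup G) : Set G) ∧
      ∀ x : ↥P, (x : G) ∈ N → (ψ x : G) = n⁻¹ * x * n)}
  one_mem' := by
    constructor
    · intro x
      simpa using one_mem (P ⊓ N)
    · exact ⟨1, one_mem _, one_mem _, fun x _ => by simp⟩
  mul_mem' := by
    rintro ψ₁ ψ₂ ⟨h1, n₁, hn₁N, hn₁n, hn₁⟩ ⟨h2, n₂, hn₂N, hn₂n, hn₂⟩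
    constructor
    · intro x
      have e : ((ψ₁ * ψ₂) x : G) = (ψ₁ (ψ₂ x) : G) := rfl
      rw [e]
      have : ((x : G))⁻¹ * (ψ₁ (ψ₂ x) : G)
          = ((x : G)⁻¹ * (ψ₂ x : G)) * ((ψ₂ x : G)⁻¹ * (ψ₁ (ψ₂ x) : G)) := by group
      rw [this]
      exact mul_mem (h2 x) (h1 (ψ₂ x))
    · refine ⟨n₂ * n₁, mul_mem hn₂N hn₁N, mul_mem hn₂n hn₁n, fun x hx => ?_⟩
      have e : ((ψ₁ * ψ₂) x : G) = (ψ₁ (ψ₂ x) : G) := rfl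
      have hx2 : (ψ₂ x : G) ∈ N := by
        rw [hn₂ x hx]
        exact mul_mem (mul_mem (inv_mem hn₂N) hx) hn₂N
      rw [e, hn₁ (ψ₂ x) hx2, hn₂ x hx]
      group
  inv_mem' := by
    rintro ψ ⟨h1, n, hnN, hnn, hn⟩
    constructor
    · intro x
      have e : (x : G)⁻¹ * (ψ⁻¹ x : G) = ((ψ⁻¹ x : G)⁻¹ * (ψ (ψ⁻¹ x) : G))⁻¹ := by
        have : ψ (ψ⁻¹ x) = x := by simp
        rw [this]; group
      rw [e]
      exact inv_mem (h1 _)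
    · refine ⟨n⁻¹, inv_mem hnN, inv_mem hnn, fun x hx => ?_⟩
      -- surjectivity of ψ on P ⊓ N
      let f : {z : ↥P // (z : G) ∈ N} → {z : ↥P // (z : G) ∈ N} := fun z =>
        ⟨ψ z.1, by rw [hn z.1 z.2]; exact mul_mem (mul_mem (inv_mem hnN) z.2) hnN⟩
      have hinj : Function.Injective f := by
        intro a b hab
        have : ψ a.1 = ψ b.1 := congrArg Subtype.val hab
        exact Subtype.ext (ψ.injective this)
      have hsurj : Function.Surjective f := Finite.surjective_of_injective hinj
      obtain ⟨⟨z, hzN⟩, hz⟩ := hsurj ⟨x, hx⟩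
      have hz1 : ψ z = x := congrArg Subtype.val hz
      have hz2 : ψ⁻¹ x = z := by rw [← hz1]; simp
      have hz3 : (x : G) = n⁻¹ * (z : G) * n := by rw [← hn z hzN, hz1]
      rw [hz2]
      rw [inv_inv]
      rw [hz3]
      group

lemma pow_coprime_mem {M : Type*} [Group M] (A : Subgroup M) {φ : M} {e : ℕ}
    (hcop : Nat.Coprime e (orderOf φ)) (h : φ ^ e ∈ A) : φ ∈ A := by
  obtain ⟨m, hm⟩ := exists_pow_eq_self_of_coprime hcop
  rw [← hm]
  exact pow_mem h m

end Stab

section PartOne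
open Pointwise

variable {G : Type*} [Group G] [Finite G]

omit [Finite G] in
lemma normalizer_inf_of_normal {N P : Subgroup G} [N.Normal] {a : G}
    (ha : a ∈ Subgroup.normalizer (P : Set G)) : a ∈ Subgroup.normalizer ((P ⊓ N : Subgroup G) : Set G) := by
  rw [Subgroup.mem_normalizer_iff]
  intro y
  constructor
  · rintro ⟨hyP, hyN⟩
    exact ⟨(Subgroup.mem_normalizer_iff.mp ha y).mp hyP,
      Subgroup.Normal.conj_mem ‹N.Normal› y hyN a⟩
  · rintro ⟨hyP, hyN⟩
    refine ⟨(Subgroup.mem_normalizer_iff.mp ha y).mpr hyP, ?_⟩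
    have := Subgroup.Normal.conj_mem ‹N.Normal› _ hyN a⁻¹
    simpa [mul_assoc] using this

lemma part_one (p : ℕ) (hp : p.Prime) (S : Sylow p G) (N : Subgroup G) [N.Normal]
    (T : Subgroup G) (hTS : T ≤ S) (P : Subgroup G) :
    Op p (autBy (N ⊔ T) P) ≤ Acirc p N P := by
  apply (Subgroup.closure_le _).mpr
  rintro φ ⟨hmem, hcop⟩
  apply Subgroup.subset_closure
  obtain ⟨h, hhNT, hhnorm, hh⟩ := mem_autBy.mp hmem
  -- decompose h = n₀ * t
  have hset : h ∈ (N : Set G) * (T : Set G) := by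
    rw [← Subgroup.normal_mul]; exact hhNT
  obtain ⟨n₀, hn₀, t, ht, hdec⟩ := hset
  -- t has p-power order
  obtain ⟨k, htk⟩ := S.isPGroup' ⟨t, hTS ht⟩
  have htkG : t ^ (p ^ k) = 1 := by
    have := congrArg (Subtype.val) htk
    simpa using this
  set e : ℕ := p ^ k with he
  -- h ^ e ∈ N
  have hhe : h ^ e ∈ N := by
    rw [← QuotientGroup.eq_one_iff (h ^ e)]
    have h1 : ((h : G ⧸ N) : G ⧸ N) = ((t : G) : G ⧸ N) := by
      rw [← hdec]
      have : ((n₀ * t : G) : G ⧸ N) = ((n₀ : G) : G ⧸ N) * ((t : G) : G ⧸ N) := rfl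
      rw [this, (QuotientGroup.eq_one_iff n₀).mpr hn₀, one_mul]
    have : ((h ^ e : G) : G ⧸ N) = ((h : G) : G ⧸ N) ^ e := rfl
    rw [this, h1, ← QuotientGroup.mk_pow, htkG]
    rfl
  -- φ = conjAut h
  have hφ : φ = conjAut P hhnorm := by
    ext x
    exact hh x
  have hφe : φ ^ e = conjAut P (pow_mem hhnorm e) := by rw [hφ, conjAut_pow]
  -- coprimality
  have hcop' : Nat.Coprime e (orderOf φ) := Nat.Coprime.pow_left k hcop.symm
  -- φ ^ e ∈ stab N P
  have hstab : φ ^ e ∈ stab N P := by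
    refine ⟨fun x => ?_, ⟨h ^ e, hhe, normalizer_inf_of_normal (pow_mem hhnorm e),
      fun x _ => by rw [hφe]; rfl⟩⟩
    rw [Subgroup.mem_inf]
    refine ⟨mul_mem (inv_mem x.2) ((φ ^ e) x).2, ?_⟩
    have hcoe : ((φ ^ e) x : G) = (h ^ e)⁻¹ * x * h ^ e := by rw [hφe]; rfl
    rw [hcoe]
    have e2 : (x : G)⁻¹ * ((h ^ e)⁻¹ * (x : G) * h ^ e)
        = ((x : G)⁻¹ * (h ^ e)⁻¹ * ((x:G)⁻¹)⁻¹) * h ^ e := by group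
    rw [e2]
    exact mul_mem (Subgroup.Normal.conj_mem ‹N.Normal› _ (inv_mem hhe) _) hhe
  have hφstab : φ ∈ stab N P := pow_coprime_mem _ hcop' hstab
  obtain ⟨hst1, hst2⟩ := hφstab
  exact ⟨hcop, ⟨h, hhnorm, hh⟩, hst1, hst2⟩

end PartOne

section PartTwo
open Pointwise

variable {G : Type*} [Group G] [Finite G]

lemma part_two (p : ℕ) (hp : p.Prime) (S : Sylow p G) (N : Subgroup G) [N.Normal]
    (T : Subgroup G) (hTS : T ≤ S) (P : Subgroup G) (hPT : P ≤ T)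
    (U : Subgroup G)
    (hUp' : ∀ u ∈ U, Nat.Coprime (orderOf u) p)
    (hUcomm : ∀ u ∈ U, ∀ x ∈ P ⊓ N, Commute u x)
    (hcent : ∀ c ∈ N ⊓ Subgroup.centralizer ↑(P ⊓ N),
      ∃ z ∈ (P ⊓ N) ⊓ Subgroup.centralizer ↑(P ⊓ N), ∃ u ∈ U, c = z * u) :
    Acirc p N P ≤ Op p (autBy N P) := by
  haveI : Fact p.Prime := ⟨hp⟩
  have hP : IsPGroup p ↥P := S.isPGroup'.to_le (hPT.trans hTS)
  set C : Subgroup G := N ⊓ Subgroup.centralizer ↑(P ⊓ N) with hCdef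
  -- P normalizes the centralizer of P ⊓ N
  have hPcent : ∀ x ∈ P, ∀ w ∈ Subgroup.centralizer (↑(P ⊓ N) : Set G),
      x⁻¹ * w * x ∈ Subgroup.centralizer (↑(P ⊓ N) : Set G) := by
    intro x hx w hw
    rw [Subgroup.mem_centralizer_iff]
    intro y hy
    have hy' : x * y * x⁻¹ ∈ (P ⊓ N) := by
      have hy2 : y ∈ P ⊓ N := hy
      rw [Subgroup.mem_inf] at hy2 ⊢
      exact ⟨(Subgroup.mem_normalizer_iff.mp (Subgroup.le_normalizer hx) y).mp hy2.1,
        Subgroup.Normal.conj_mem ‹N.Normal› y hy2.2 x⟩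
    have hkey := Subgroup.mem_centralizer_iff.mp hw (x * y * x⁻¹) hy'
    have := congrArg (fun z => x⁻¹ * z * x) hkey
    simpa [mul_assoc] using this
  have hPC : ∀ x ∈ P, ∀ c ∈ C, x⁻¹ * c * x ∈ C := by
    intro x hx c hc
    rw [hCdef, Subgroup.mem_inf] at hc ⊢
    constructor
    · simpa using Subgroup.Normal.conj_mem ‹N.Normal› c hc.1 x⁻¹
    · exact hPcent x hx c hc.2
  -- p-elements of C lie in P
  have hCp : ∀ c ∈ C, ∀ a : ℕ, c ^ p ^ a = 1 → c ∈ P := by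
    intro c hc a hca
    obtain ⟨z, hz, v, hv, hczv⟩ := hcent c hc
    rw [Subgroup.mem_inf] at hz
    have hzPN : z ∈ P ⊓ N := hz.1
    have hzP : z ∈ P := (Subgroup.mem_inf.mp hzPN).1
    have hcommzv : Commute z v := (hUcomm v hv z hzPN).symm
    have h1 : z ^ p ^ a * v ^ p ^ a = 1 := by
      rw [← Commute.mul_pow hcommzv, ← hczv]; exact hca
    have h2 : v ^ p ^ a = (z ^ p ^ a)⁻¹ := (inv_eq_of_mul_eq_one_right h1).symm
    obtain ⟨b, hb⟩ := hP (⟨z, hzP⟩ ^ p ^ a)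
    have hbG : (z ^ p ^ a) ^ p ^ b = 1 := by
      have := congrArg (Subtype.val) hb
      simpa using this
    have hv1 : v ^ (p ^ a * p ^ b) = 1 := by
      rw [pow_mul, h2, inv_pow, hbG, inv_one]
    have hdvd : orderOf v ∣ p ^ (a + b) := by
      rw [pow_add]; exact orderOf_dvd_of_pow_eq_one hv1
    have hcop : Nat.Coprime (orderOf v) (p ^ (a + b)) :=
      Nat.Coprime.pow_right _ (hUp' v hv)
    have : orderOf v = 1 := Nat.eq_one_of_dvd_coprimes hcop dvd_rfl hdvd
    have hv1' : v = 1 := orderOf_eq_one_iff.mp this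
    rw [hczv, hv1', mul_one]
    exact hzP
  set Gam : Subgroup G := C ⊔ P with hGamdef
  have hCle : C ≤ Gam := le_sup_left
  have hPle : P ≤ Gam := le_sup_right
  -- Gam = C * P as sets
  have hGamset : ∀ γ : G, γ ∈ Gam → ∃ c ∈ C, ∃ x ∈ P, γ = c * x := by
    have hDelta : ∃ D : Subgroup G, ∀ w : G, w ∈ D ↔ ∃ c ∈ C, ∃ x ∈ P, w = c * x := by
      refine ⟨{ carrier := {w : G | ∃ c ∈ C, ∃ x ∈ P, w = c * x}
                one_mem' := ⟨1, one_mem _, 1, one_mem _, by simp⟩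
                mul_mem' := ?_
                inv_mem' := ?_ }, fun w => Iff.rfl⟩
      · rintro w₁ w₂ ⟨c₁, hc₁, x₁, hx₁, rfl⟩ ⟨c₂, hc₂, x₂, hx₂, rfl⟩
        refine ⟨c₁ * (x₁ * c₂ * x₁⁻¹), mul_mem hc₁ ?_, x₁ * x₂, mul_mem hx₁ hx₂, by group⟩
        have := hPC x₁⁻¹ (inv_mem hx₁) c₂ hc₂
        simpa using this
      · rintro w ⟨c, hc, x, hx, rfl⟩
        refine ⟨x⁻¹ * c⁻¹ * x, ?_, x⁻¹, inv_mem hx, by group⟩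
        exact hPC x hx c⁻¹ (inv_mem hc)
    obtain ⟨D, hD⟩ := hDelta
    have hGD : Gam ≤ D := by
      rw [hGamdef]
      apply sup_le
      · intro c hc; exact (hD c).mpr ⟨c, hc, 1, one_mem _, by simp⟩
      · intro x hx; exact (hD x).mpr ⟨1, one_mem _, x, hx, by simp⟩
    intro γ hγ
    exact (hD γ).mp (hGD hγ)
  -- P is a Sylow p-subgroup of Gam
  have hPGampg : IsPGroup p ↥(P.subgroupOf Gam) :=
    hP.of_equiv (Subgroup.subgroupOfEquivOfLe hPle).symm
  have hmax : ∀ {Q : Subgroup ↥Gam}, IsPGroup p ↥Q → P.subgroupOf Gam ≤ Q →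
      Q = P.subgroupOf Gam := by
    intro Q hQ hle
    refine le_antisymm ?_ hle
    intro q hq
    obtain ⟨c, hc, x, hx, hcx⟩ := hGamset (q : G) q.2
    have hxQ : (⟨x, hPle hx⟩ : ↥Gam) ∈ Q := hle (Subgroup.mem_subgroupOf.mpr hx)
    have hcQ : q * (⟨x, hPle hx⟩ : ↥Gam)⁻¹ ∈ Q := mul_mem hq (inv_mem hxQ)
    obtain ⟨a, ha⟩ := hQ ⟨_, hcQ⟩
    have hc1 : c ^ p ^ a = 1 := by
      have := congrArg (fun z : ↥Q => ((z : ↥Gam) : G)) ha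
      simp only [SubmonoidClass.coe_pow, OneMemClass.coe_one] at this
      have hcoe : ((q * (⟨x, hPle hx⟩ : ↥Gam)⁻¹ : ↥Gam) : G) = c := by
        push_cast
        rw [hcx]; group
      rw [hcoe] at this
      exact this
    have hcP : c ∈ P := hCp c hc a hc1
    have hqP : (q : G) ∈ P := by rw [hcx]; exact mul_mem hcP hx
    exact Subgroup.mem_subgroupOf.mpr hqP
  let SylP : Sylow p ↥Gam := ⟨P.subgroupOf Gam, hPGampg, hmax⟩
  haveI : Finite (Sylow p ↥Gam) :=
    Finite.of_injective (fun (Q : Sylow p ↥Gam) => ((Q : Subgroup ↥Gam) : Set ↥Gam))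
      (fun Q₁ Q₂ h => Sylow.ext (SetLike.coe_injective h))
  -- now handle the generators of Acirc
  apply (Subgroup.closure_le _).mpr
  rintro φ ⟨hq, ⟨g, hgnorm, hg⟩, hcomm3, ⟨n, hnN, hnnorm, hn⟩⟩
  apply Subgroup.subset_closure
  set u : G := g * n⁻¹ with hudef
  have hucent : u ∈ Subgroup.centralizer (↑(P ⊓ N) : Set G) := by
    rw [Subgroup.mem_centralizer_iff]
    intro y hy
    have hy2 : y ∈ P ⊓ N := hy
    rw [Subgroup.mem_inf] at hy2
    have E : g⁻¹ * y * g = n⁻¹ * y * n :=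
      (hg ⟨y, hy2.1⟩).symm.trans (hn ⟨y, hy2.1⟩ hy2.2)
    calc y * u = g * (g⁻¹ * y * g) * n⁻¹ := by rw [hudef]; group
      _ = g * (n⁻¹ * y * n) * n⁻¹ := by rw [E]
      _ = u * y := by rw [hudef]; group
  -- commutators with elements congruent to g mod N land in N
  have hconjN : ∀ w : G, w⁻¹ * g ∈ N → ∀ x : ↥P, (x : G)⁻¹ * w⁻¹ * x * w ∈ N := by
    intro w hw x
    have h0 : (x : G)⁻¹ * (g⁻¹ * x * g) ∈ N := by
      have := hcomm3 x
      rw [hg x] at this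
      exact (Subgroup.mem_inf.mp this).2
    set m' : G := w⁻¹ * g with hm'def
    have hwdef : w = g * m'⁻¹ := by rw [hm'def]; group
    have e : (x : G)⁻¹ * w⁻¹ * x * w
        = ((x : G)⁻¹ * m' * x) * ((x : G)⁻¹ * (g⁻¹ * x * g)) * m'⁻¹ := by
      rw [hwdef]; group
    rw [e]
    have hconj : (x : G)⁻¹ * m' * x ∈ N := by
      simpa using Subgroup.Normal.conj_mem ‹N.Normal› m' hw x⁻¹
    exact mul_mem (mul_mem hconj h0) (inv_mem hw)
  have huinvg : u⁻¹ * g ∈ N := by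
    have : u⁻¹ * g = n := by rw [hudef]; group
    rw [this]; exact hnN
  -- u⁻¹ P u ≤ Gam
  have htau : ∀ x : ↥P, (x : G)⁻¹ * u⁻¹ * x * u ∈ C := by
    intro x
    rw [hCdef, Subgroup.mem_inf]
    constructor
    · exact hconjN u huinvg x
    · have e : (x : G)⁻¹ * u⁻¹ * x * u = ((x : G)⁻¹ * u⁻¹ * x) * u := by group
      rw [e]
      exact mul_mem (hPcent x x.2 u⁻¹ (inv_mem hucent)) hucent
  set P₁ : Subgroup G := P.map (MulAut.conj u⁻¹).toMonoidHom with hP₁def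
  have hP₁mem : ∀ x : ↥P, u⁻¹ * x * u ∈ P₁ := by
    intro x
    rw [hP₁def]
    refine Subgroup.mem_map.mpr ⟨x, x.2, ?_⟩
    simp [MulAut.conj_apply]
  have hP₁le : P₁ ≤ Gam := by
    rw [hP₁def]
    rintro y ⟨x, hx, rfl⟩
    have e : (MulAut.conj u⁻¹).toMonoidHom x = x * ((x : G)⁻¹ * u⁻¹ * x * u) := by
      simp [MulAut.conj_apply]; group
    rw [e]
    exact mul_mem (hPle hx) (hCle (htau ⟨x, hx⟩))
  have hP₁pg : IsPGroup p ↥(P₁.subgroupOf Gam) :=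
    ((hP.map (MulAut.conj u⁻¹).toMonoidHom).of_equiv
      (Subgroup.subgroupOfEquivOfLe hP₁le).symm)
  obtain ⟨Q₁, hQ₁⟩ := hP₁pg.exists_le_sylow
  obtain ⟨γ, hγ⟩ := MulAction.exists_smul_eq ↥Gam Q₁ SylP
  have key : ∀ x : ↥P, (γ : G) * (u⁻¹ * x * u) * (γ : G)⁻¹ ∈ P := by
    intro x
    have hmemP₁ : u⁻¹ * x * u ∈ P₁ := hP₁mem x
    set ξ : ↥Gam := ⟨u⁻¹ * x * u, hP₁le hmemP₁⟩ with hξdef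
    have hξ : ξ ∈ Q₁ := hQ₁ (Subgroup.mem_subgroupOf.mpr hmemP₁)
    have h2 : MulAut.conj γ • ξ ∈ MulAut.conj γ • (Q₁ : Subgroup ↥Gam) :=
      Subgroup.smul_mem_pointwise_smul ξ (MulAut.conj γ) _ hξ
    have h2' : MulAut.conj γ • ξ ∈ ((γ • Q₁ : Sylow p ↥Gam) : Subgroup ↥Gam) := by
      rw [Sylow.coe_subgroup_smul]; exact h2
    rw [hγ] at h2'
    have h3 : ((MulAut.conj γ • ξ : ↥Gam) : G) ∈ P := Subgroup.mem_subgroupOf.mp h2'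
    have e : ((MulAut.conj γ • ξ : ↥Gam) : G) = (γ : G) * (u⁻¹ * x * u) * (γ : G)⁻¹ := by
      rw [MulAut.smul_def, MulAut.conj_apply]
      push_cast
      rfl
    rw [e] at h3
    exact h3
  have wnorm : (γ : G) * u⁻¹ ∈ Subgroup.normalizer (P : Set G) := by
    have hsn : (γ : G) * u⁻¹ ∈ Subgroup.normalizer (↑P : Set G) := by
      apply Subgroup.mem_normalizer_fintype
      intro y hy
      have := key ⟨y, hy⟩
      have e : (γ : G) * u⁻¹ * y * ((γ : G) * u⁻¹)⁻¹
          = (γ : G) * (u⁻¹ * y * u) * (γ : G)⁻¹ := by group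
      rw [e]
      exact this
    exact hsn
  -- decompose γ⁻¹ = c * x'
  obtain ⟨c, hc, x', hx', hγdec⟩ := hGamset ((γ⁻¹ : ↥Gam) : G) (γ⁻¹ : ↥Gam).2
  have hγdec' : (γ : G)⁻¹ = c * x' := by
    rw [← hγdec]; rfl
  set h₂ : G := u * c with hh₂def
  have hh₂norm : h₂ ∈ Subgroup.normalizer (P : Set G) := by
    have e : h₂ = ((γ : G) * u⁻¹)⁻¹⁻¹⁻¹ * x'⁻¹ := by
      rw [hh₂def]
      have : u * (γ : G)⁻¹ = u * c * x' := by rw [hγdec']; group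
      rw [show u * c = u * (γ:G)⁻¹ * x'⁻¹ from by rw [this]; group]
      group
    rw [e]
    exact mul_mem (inv_mem (inv_mem (inv_mem wnorm))) (inv_mem (Subgroup.le_normalizer hx'))
  have hcC : c ∈ C := hc
  have hh₂cent : h₂ ∈ Subgroup.centralizer (↑(P ⊓ N) : Set G) := by
    rw [hh₂def]
    exact mul_mem hucent ((Subgroup.mem_inf.mp hcC).2)
  have hh₂invg : h₂⁻¹ * g ∈ N := by
    have e : h₂⁻¹ * g = c⁻¹ * (u⁻¹ * g) := by rw [hh₂def]; group
    rw [e]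
    exact mul_mem (inv_mem (Subgroup.mem_inf.mp hcC).1) huinvg
  set m : G := h₂⁻¹ * g with hmdef
  have hmN : m ∈ N := hh₂invg
  have hmnorm : m ∈ Subgroup.normalizer (P : Set G) := mul_mem (inv_mem hh₂norm) hgnorm
  set χ : MulAut ↥P := conjAut P hmnorm with hχdef
  have hχmem : χ ∈ autBy N P := mem_autBy.mpr ⟨m, hmN, hmnorm, fun x => rfl⟩
  set ψ : MulAut ↥P := conjAut P hh₂norm with hψdef
  have hφdec : φ = χ * ψ := by
    ext x
    rw [hg x]
    have e : ((χ * ψ) x : G) = m⁻¹ * (h₂⁻¹ * x * h₂) * m := rfl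
    rw [e, hmdef]
    group
  -- stability: ψ has p-power order
  have hζN : ∀ x : ↥P, ((x⁻¹ * ψ x : ↥P) : G) ∈ N := by
    intro x
    have := hconjN h₂ hh₂invg x
    have e : ((x⁻¹ * ψ x : ↥P) : G) = (x : G)⁻¹ * h₂⁻¹ * x * h₂ := by
      push_cast
      rw [hψdef, coe_conjAut]
      group
    rw [e]
    exact this
  have hψζ : ∀ x : ↥P, ψ (x⁻¹ * ψ x) = x⁻¹ * ψ x := by
    intro x
    have hζPN : ((x⁻¹ * ψ x : ↥P) : G) ∈ P ⊓ N :=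
      Subgroup.mem_inf.mpr ⟨(x⁻¹ * ψ x : ↥P).2, hζN x⟩
    have hcomm := Subgroup.mem_centralizer_iff.mp hh₂cent _ hζPN
    apply Subtype.ext
    rw [hψdef, coe_conjAut]
    calc h₂⁻¹ * ((x⁻¹ * ψ x : ↥P) : G) * h₂ = h₂⁻¹ * (((x⁻¹ * ψ x : ↥P) : G) * h₂) := by group
      _ = h₂⁻¹ * (h₂ * ((x⁻¹ * ψ x : ↥P) : G)) := by rw [hcomm]
      _ = ((x⁻¹ * ψ x : ↥P) : G) := by group
  have hψpow : ∀ (j : ℕ) (x : ↥P), (ψ ^ j) x = x * (x⁻¹ * ψ x) ^ j := by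
    intro j
    induction j with
    | zero => intro x; simp
    | succ j ih =>
      intro x
      have h1 : (ψ ^ (j + 1)) x = ψ x * (x⁻¹ * ψ x) ^ j := by
        rw [pow_succ', MulAut.mul_apply, ih x, map_mul, map_pow, hψζ x]
      rw [h1, pow_succ', ← mul_assoc, mul_inv_cancel_left]
  have hψe : ψ ^ (Nat.card ↥P) = 1 := by
    ext x
    rw [hψpow]
    rw [pow_card_eq_one']
    simp
  set e : ℕ := Nat.card ↥P with hedef
  have hcop' : Nat.Coprime e (orderOf φ) := by
    obtain ⟨k, hk⟩ := IsPGroup.iff_card.mp hP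
    rw [hedef, hk]
    exact Nat.Coprime.pow_left k hq.symm
  have key2 : ∀ j : ℕ, ∃ χ' ∈ autBy N P, φ ^ j = χ' * ψ ^ j := by
    intro j
    induction j with
    | zero => exact ⟨1, one_mem _, by simp⟩
    | succ j ih =>
      obtain ⟨χ', hχ', hj⟩ := ih
      refine ⟨χ' * (ψ ^ j * χ * (ψ ^ j)⁻¹), mul_mem hχ' ?_, ?_⟩
      · rw [hψdef, conjAut_pow]
        exact autBy_conj_mem _ hχmem
      · rw [pow_succ, hj, hφdec]
        group
  obtain ⟨χe, hχe, hfe⟩ := key2 e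
  have hφe : φ ^ e ∈ autBy N P := by
    rw [hfe, hψe, mul_one]
    exact hχe
  exact ⟨pow_coprime_mem _ hcop' hφe, hq⟩

end PartTwo

theorem stmt0 (p : ℕ) (hp : p.Prime) {G : Type*} [Group G] [Finite G]
    (S : Sylow p G) (N : Subgroup G) [N.Normal]
    (T : Subgroup G) (hS0T : (S : Subgroup G) ⊓ N ≤ T) (hTS : T ≤ S)
    (P : Subgroup G) (hPT : P ≤ T)
    (U : Subgroup G) (hUN : U ≤ N)
    (hUp' : ∀ u ∈ U, Nat.Coprime (orderOf u) p)
    (hUcomm : ∀ u ∈ U, ∀ x ∈ P ⊓ N, Commute u x)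
    (hcent : ∀ c ∈ N ⊓ Subgroup.centralizer ↑(P ⊓ N),
      ∃ z ∈ (P ⊓ N) ⊓ Subgroup.centralizer ↑(P ⊓ N), ∃ u ∈ U, c = z * u) :
    Acirc p N P = Op p (autBy (N ⊔ T) P) ∧
      Op p (autBy (N ⊔ T) P) = Op p (autBy N P) := by
  have h21 : Acirc p N P ≤ Op p (autBy N P) :=
    part_two p hp S N T hTS P hPT U hUp' hUcomm hcent
  have h33 : Op p (autBy N P) ≤ Op p (autBy (N ⊔ T) P) :=
    Subgroup.closure_mono (fun x hx => ⟨autBy_mono P le_sup_left hx.1, hx.2⟩)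
  have h13 : Op p (autBy (N ⊔ T) P) ≤ Acirc p N P := part_one p hp S N T hTS P
  exact ⟨le_antisymm (h21.trans h33) h13, le_antisymm (h13.trans h21) h33⟩
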